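/- Let d ≥ 1 and define 𝓘_d(s) = −∫_0^∞ (e^{−s²t} e^{−2dt} I_0(2t)^d − e^{−t}) dt/t for real s ≥ 0. Then for every s ≥ 0 one has 𝓘_d(s) = log(s² + 2d) − ∫_0^∞ e^{−s²t} e^{−2dt} (I_0(2t)^d − 1) dt/t, and 𝓘_d(s) − log(s²) → 0 as s → +∞. -/

import Mathlib

open MeasureTheory Real Filter

/-- The modified `I`-Bessel function of integer order `x`, via its integral
representation `I_x(t) = (1/π) ∫_0^π e^{t cos θ} cos(xθ) dθ`. -/
noncomputable def besselI (x : ℤ) (t : ℝ) : ℝ :=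
  (1 / Real.pi) * ∫ θ in (0:ℝ)..Real.pi, Real.exp (t * Real.cos θ) * Real.cos ((x : ℝ) * θ)

/-- The function `𝓘_d(s) = -∫_0^∞ (e^{-s²t} e^{-2dt} I_0(2t)^d - e^{-t}) dt/t`. -/
noncomputable def mathcalI (d : ℕ) (s : ℝ) : ℝ :=
  -∫ t in Set.Ioi (0:ℝ),
    (Real.exp (-s ^ 2 * t) * Real.exp (-(2 * d * t)) * (besselI 0 (2 * t)) ^ d
      - Real.exp (-t)) / t

open Set

section Aux

lemma besselI_zero_eq (x : ℝ) : besselI 0 x = (1/π) * ∫ θ in (0:ℝ)..π, exp (x * Real.cos θ) := by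
  simp [besselI]

lemma continuous_besselI_zero : Continuous (besselI 0) := by
  have h : Continuous fun x : ℝ => ∫ θ in (0:ℝ)..π, exp (x * Real.cos θ) := by
    apply intervalIntegral.continuous_parametric_intervalIntegral_of_continuous'
    fun_prop
  have : besselI 0 = fun x => (1/π) * ∫ θ in (0:ℝ)..π, exp (x * Real.cos θ) := by
    funext x; exact besselI_zero_eq x
  rw [this]; exact continuous_const.mul h

lemma one_le_besselI_zero {x : ℝ} (hx : 0 ≤ x) : 1 ≤ besselI 0 x := by
  rw [besselI_zero_eq]
  have h1 : ∫ θ in (0:ℝ)..π, (1 + x * Real.cos θ) = π := by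
    rw [intervalIntegral.integral_add (intervalIntegrable_const) ((by fun_prop : Continuous fun θ:ℝ => x * Real.cos θ).intervalIntegrable _ _)]
    simp [intervalIntegral.integral_const_mul, integral_cos]
  have h2 : (∫ θ in (0:ℝ)..π, (1 + x * Real.cos θ)) ≤ ∫ θ in (0:ℝ)..π, exp (x * Real.cos θ) := by
    apply intervalIntegral.integral_mono_on pi_pos.le
    · exact (intervalIntegrable_const).add ((by fun_prop : Continuous fun θ:ℝ => x * Real.cos θ).intervalIntegrable _ _)
    · exact (Real.continuous_exp.comp (continuous_const.mul Real.continuous_cos)).intervalIntegrable _ _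
    · intro θ _
      have := Real.add_one_le_exp (x * Real.cos θ)
      linarith
  rw [h1] at h2
  calc (1:ℝ) = (1/π) * π := by field_simp
  _ ≤ (1/π) * ∫ θ in (0:ℝ)..π, exp (x * Real.cos θ) :=
      mul_le_mul_of_nonneg_left h2 (by positivity)

lemma besselI_zero_le {x : ℝ} (hx : 0 ≤ x) : besselI 0 x ≤ exp x := by
  rw [besselI_zero_eq]
  have h2 : (∫ θ in (0:ℝ)..π, exp (x * Real.cos θ)) ≤ ∫ θ in (0:ℝ)..π, exp x := by
    apply intervalIntegral.integral_mono_on pi_pos.le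
    · exact (Real.continuous_exp.comp (continuous_const.mul Real.continuous_cos)).intervalIntegrable _ _
    · exact intervalIntegrable_const
    · intro θ _
      exact Real.exp_le_exp.2 (by nlinarith [Real.cos_le_one θ, Real.neg_one_le_cos θ])
  rw [intervalIntegral.integral_const, smul_eq_mul, sub_zero] at h2
  calc (1/π) * ∫ θ in (0:ℝ)..π, exp (x * Real.cos θ) ≤ (1/π) * (π * exp x) :=
        mul_le_mul_of_nonneg_left h2 (by positivity)
  _ = exp x := by field_simp

lemma besselI_zero_decay {t : ℝ} (ht : 0 < t) :
    besselI 0 (2*t) ≤ exp (2*t) * (Real.sqrt π / (4 * Real.sqrt t)) := by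
  have hb : (0:ℝ) < 4*t/π^2 := by positivity
  have h1 : (∫ θ in (0:ℝ)..π, exp (2*t * Real.cos θ))
      ≤ ∫ θ in (0:ℝ)..π, exp (2*t) * exp (-(4*t/π^2) * θ^2) := by
    apply intervalIntegral.integral_mono_on pi_pos.le
    · exact (by fun_prop : Continuous fun θ:ℝ => exp (2*t * Real.cos θ)).intervalIntegrable _ _
    · exact (by fun_prop : Continuous fun θ:ℝ => exp (2*t) * exp (-(4*t/π^2) * θ^2)).intervalIntegrable _ _
    · intro θ hθ
      rw [← Real.exp_add]
      apply Real.exp_le_exp.2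
      have hcos : Real.cos θ ≤ 1 - 2/π^2 * θ^2 :=
        Real.cos_le_one_sub_mul_cos_sq (by rw [abs_of_nonneg hθ.1]; exact hθ.2)
      have hπ := Real.pi_pos
      have h2t : (0:ℝ) ≤ 2*t := by positivity
      have h := mul_le_mul_of_nonneg_left hcos h2t
      have e : 2*t*(1 - 2/π^2*θ^2) = 2*t + -(4*t/π^2)*θ^2 := by field_simp; ring
      linarith
  have h2 : (∫ θ in (0:ℝ)..π, exp (-(4*t/π^2) * θ^2))
      ≤ ∫ θ in Ioi (0:ℝ), exp (-(4*t/π^2) * θ^2) := by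
    rw [intervalIntegral.integral_of_le pi_pos.le]
    refine setIntegral_mono_set ((integrable_exp_neg_mul_sq hb).integrableOn)
      (Eventually.of_forall fun θ => (Real.exp_pos _).le)
      (HasSubset.Subset.eventuallyLE Ioc_subset_Ioi_self)
  have h3 : (∫ θ in Ioi (0:ℝ), exp (-(4*t/π^2) * θ^2)) = Real.sqrt (π/(4*t/π^2)) / 2 :=
    integral_gaussian_Ioi _
  have key : Real.sqrt (π/(4*t/π^2)) / 2 / π = Real.sqrt π / (4 * Real.sqrt t) := by
    have hπ := Real.pi_pos
    have e1 : π/(4*t/π^2) = π^2 * (π/(4*t)) := by field_simp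
    rw [e1, Real.sqrt_mul (by positivity), Real.sqrt_sq hπ.le,
      Real.sqrt_div hπ.le, show (4:ℝ)*t = 2^2*t by ring,
      Real.sqrt_mul (by positivity), Real.sqrt_sq (by norm_num : (0:ℝ) ≤ 2)]
    have hst : Real.sqrt t ≠ 0 := (Real.sqrt_pos.2 ht).ne'
    field_simp
    ring
  rw [besselI_zero_eq]
  calc (1/π) * ∫ θ in (0:ℝ)..π, exp (2*t * Real.cos θ)
      ≤ (1/π) * ∫ θ in (0:ℝ)..π, exp (2*t) * exp (-(4*t/π^2) * θ^2) := by
        apply mul_le_mul_of_nonneg_left h1 (by positivity)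
    _ = (1/π) * (exp (2*t) * ∫ θ in (0:ℝ)..π, exp (-(4*t/π^2) * θ^2)) := by
        rw [intervalIntegral.integral_const_mul]
    _ ≤ (1/π) * (exp (2*t) * (Real.sqrt (π/(4*t/π^2)) / 2)) := by
        have := mul_le_mul_of_nonneg_left (h3 ▸ h2) (Real.exp_pos (2*t)).le
        exact mul_le_mul_of_nonneg_left this (by positivity)
    _ = exp (2*t) * (Real.sqrt (π/(4*t/π^2)) / 2 / π) := by ring
    _ = exp (2*t) * (Real.sqrt π / (4 * Real.sqrt t)) := by rw [key]

lemma frullani_prod_integrable {a : ℝ} (ha : 1 ≤ a) :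
    Integrable (fun p : ℝ × ℝ => exp (-(p.2 * p.1)))
      ((volume.restrict (Ioi (0:ℝ))).prod (volume.restrict (Ioc (1:ℝ) a))) := by
  have hg : Integrable (fun p : ℝ × ℝ => exp (-p.1) * 1)
      ((volume.restrict (Ioi (0:ℝ))).prod (volume.restrict (Ioc (1:ℝ) a))) := by
    refine Integrable.mul_prod (f := fun t : ℝ => exp (-t)) (g := fun _ : ℝ => (1:ℝ)) ?_ (integrable_const 1)
    simpa [IntegrableOn] using exp_neg_integrableOn_Ioi (0:ℝ) zero_lt_one
  refine hg.mono' ((by fun_prop : Continuous fun p : ℝ × ℝ => exp (-(p.2 * p.1))).aestronglyMeasurable) ?_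
  rw [Measure.prod_restrict, ae_restrict_iff' (measurableSet_Ioi.prod measurableSet_Ioc)]
  filter_upwards with p hp
  obtain ⟨hp1, hp2⟩ := hp
  rw [Real.norm_eq_abs, abs_of_pos (exp_pos _), mul_one]
  apply Real.exp_le_exp.2
  simp only [mem_Ioi, mem_Ioc] at hp1 hp2
  nlinarith [hp2.1, hp1]

lemma frullani_inner {a : ℝ} (ha : 1 ≤ a) : ∀ t ∈ Ioi (0:ℝ),
    (∫ u in Ioc (1:ℝ) a, exp (-(u*t))) = (exp (-t) - exp (-(a*t)))/t := by
  intro t ht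
  have ht0 : (0:ℝ) < t := ht
  rw [← intervalIntegral.integral_of_le ha]
  have hF : ∀ u ∈ uIcc (1:ℝ) a, HasDerivAt (fun u => -(exp (-(u*t))/t)) (exp (-(u*t))) u := by
    intro u _
    have h1 : HasDerivAt (fun u : ℝ => -(u*t)) (-t) u := by
      exact (hasDerivAt_mul_const t).neg
    have h3 := ((h1.exp).div_const t).neg
    rw [mul_neg, neg_div, neg_neg, mul_div_assoc, div_self ht0.ne', mul_one] at h3
    exact h3
  rw [intervalIntegral.integral_eq_sub_of_hasDerivAt hF
    ((by fun_prop : Continuous fun u : ℝ => exp (-(u*t))).intervalIntegrable _ _)]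
  rw [one_mul]
  ring

lemma frullani_swap {a : ℝ} (ha : 1 ≤ a) :
    ∫ t in Ioi (0:ℝ), (exp (-t) - exp (-(a*t)))/t = Real.log a := by
  have key := MeasureTheory.integral_integral_swap (f := fun (t u : ℝ) => exp (-(u*t)))
      (frullani_prod_integrable ha)
  calc ∫ t in Ioi (0:ℝ), (exp (-t) - exp (-(a*t)))/t
      = ∫ t in Ioi (0:ℝ), ∫ u in Ioc (1:ℝ) a, exp (-(u*t)) :=
        (setIntegral_congr_fun measurableSet_Ioi (fun t ht => (frullani_inner ha t ht))).symm
    _ = ∫ u in Ioc (1:ℝ) a, ∫ t in Ioi (0:ℝ), exp (-(u*t)) := key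
    _ = ∫ u in Ioc (1:ℝ) a, u⁻¹ := by
        refine setIntegral_congr_fun measurableSet_Ioc (fun u hu => ?_)
        have hu0 : (0:ℝ) < u := lt_trans one_pos hu.1
        have h := integral_comp_mul_left_Ioi (fun x => exp (-x)) 0 hu0
        simp only [mul_zero] at h
        rw [h, integral_exp_neg_Ioi_zero, smul_eq_mul, mul_one]
    _ = Real.log a := by
        rw [← intervalIntegral.integral_of_le ha, integral_inv_of_pos one_pos
          (lt_of_lt_of_le one_pos ha), div_one]

lemma frullani_integrableOn {a : ℝ} (ha : 1 ≤ a) :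
    IntegrableOn (fun t => (exp (-(a*t)) - exp (-t))/t) (Ioi (0:ℝ)) := by
  have h := (frullani_prod_integrable ha).integral_prod_left
  have h2 : IntegrableOn (fun t => (exp (-t) - exp (-(a*t)))/t) (Ioi (0:ℝ)) := by
    refine h.congr ?_
    rw [EventuallyEq, ae_restrict_iff' measurableSet_Ioi]
    filter_upwards with t ht
    exact frullani_inner ha t ht
  have := h2.neg
  refine this.congr (Eventually.of_forall fun t => ?_)
  simp only [Pi.neg_apply]
  ring

lemma frullani_eq {a : ℝ} (ha : 1 ≤ a) :
    ∫ t in Ioi (0:ℝ), (exp (-(a*t)) - exp (-t))/t = -Real.log a := by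
  rw [← frullani_swap ha, ← integral_neg]
  congr 1
  funext t
  ring

/-- The auxiliary function `G d t = e^{-2dt} (I_0(2t)^d - 1)/t`. -/
noncomputable def G (d : ℕ) (t : ℝ) : ℝ :=
  exp (-(2 * (d:ℝ) * t)) * ((besselI 0 (2*t)) ^ d - 1) / t

lemma pow_bessel_le (d : ℕ) {t : ℝ} (ht : 0 ≤ t) :
    (besselI 0 (2*t)) ^ d ≤ exp (2 * (d:ℝ) * t) := by
  calc (besselI 0 (2*t)) ^ d ≤ (exp (2*t)) ^ d :=
        pow_le_pow_left₀ (le_trans zero_le_one (one_le_besselI_zero (by positivity)))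
          (besselI_zero_le (by positivity)) d
  _ = exp (2 * (d:ℝ) * t) := by rw [← Real.exp_nat_mul]; ring_nf

lemma G_nonneg (d : ℕ) {t : ℝ} (ht : 0 < t) : 0 ≤ G d t := by
  apply div_nonneg _ ht.le
  apply mul_nonneg (exp_pos _).le
  have := one_le_besselI_zero (x := 2*t) (by positivity)
  have := one_le_pow₀ this (n := d)
  linarith

lemma G_le_const (d : ℕ) {t : ℝ} (ht : 0 < t) : G d t ≤ 2 * d := by
  rw [G, div_le_iff₀ ht]
  have h1 : exp (-(2 * (d:ℝ) * t)) * ((besselI 0 (2*t)) ^ d - 1)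
      ≤ 1 - exp (-(2 * (d:ℝ) * t)) := by
    have h2 := mul_le_mul_of_nonneg_left (pow_bessel_le d ht.le) (exp_pos (-(2 * (d:ℝ) * t))).le
    rw [← Real.exp_add] at h2
    simp only [neg_add_cancel, Real.exp_zero] at h2
    nlinarith [exp_pos (-(2 * (d:ℝ) * t))]
  have h3 : 1 - exp (-(2 * (d:ℝ) * t)) ≤ 2 * (d:ℝ) * t := by
    have := Real.add_one_le_exp (-(2 * (d:ℝ) * t))
    linarith
  calc exp (-(2 * (d:ℝ) * t)) * ((besselI 0 (2*t)) ^ d - 1) ≤ 2 * (d:ℝ) * t :=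
    le_trans h1 h3

lemma G_le_decay {d : ℕ} (hd : 1 ≤ d) {t : ℝ} (ht : 0 < t) :
    G d t ≤ Real.sqrt π / 4 * t ^ (-(3/2) : ℝ) := by
  set c := exp (-(2*t)) * besselI 0 (2*t) with hc
  have hI1 : 1 ≤ besselI 0 (2*t) := one_le_besselI_zero (by positivity)
  have hc0 : 0 ≤ c := mul_nonneg (exp_pos _).le (by linarith)
  have hc1 : c ≤ 1 := by
    have := mul_le_mul_of_nonneg_left (besselI_zero_le (x := 2*t) (by positivity))
      (exp_pos (-(2*t))).le
    rwa [← Real.exp_add, neg_add_cancel, Real.exp_zero] at this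
  have hcd : c ≤ Real.sqrt π / (4 * Real.sqrt t) := by
    have := mul_le_mul_of_nonneg_left (besselI_zero_decay ht) (exp_pos (-(2*t))).le
    rwa [← mul_assoc, ← Real.exp_add, neg_add_cancel, Real.exp_zero, one_mul] at this
  have hnum : exp (-(2 * (d:ℝ) * t)) * ((besselI 0 (2*t)) ^ d - 1) ≤ c ^ d := by
    have : exp (-(2 * (d:ℝ) * t)) = (exp (-(2*t))) ^ d := by
      rw [← Real.exp_nat_mul]; ring_nf
    rw [this, hc, mul_pow]
    have hpow : (0:ℝ) ≤ (besselI 0 (2*t)) ^ d := pow_nonneg (by linarith) d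
    nlinarith [pow_pos (exp_pos (-(2*t))) d]
  have hcd1 : c ^ d ≤ Real.sqrt π / (4 * Real.sqrt t) := by
    calc c ^ d ≤ c ^ 1 := pow_le_pow_of_le_one hc0 hc1 hd
    _ = c := pow_one c
    _ ≤ _ := hcd
  have hrpow : t ^ (-(3/2) : ℝ) = (Real.sqrt t * t)⁻¹ := by
    rw [Real.rpow_neg ht.le]
    congr 1
    rw [show (3/2 : ℝ) = 1/2 + 1 by norm_num, Real.rpow_add ht, Real.rpow_one,
      ← Real.sqrt_eq_rpow]
  rw [G, div_le_iff₀ ht, hrpow]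
  have hst : 0 < Real.sqrt t := Real.sqrt_pos.2 ht
  calc exp (-(2 * (d:ℝ) * t)) * ((besselI 0 (2*t)) ^ d - 1)
      ≤ Real.sqrt π / (4 * Real.sqrt t) := le_trans hnum hcd1
  _ = Real.sqrt π / 4 * (Real.sqrt t * t)⁻¹ * t := by field_simp

lemma continuousOn_G (d : ℕ) : ContinuousOn (G d) (Ioi (0:ℝ)) := by
  have h : Continuous fun t : ℝ => exp (-(2 * (d:ℝ) * t)) * ((besselI 0 (2*t)) ^ d - 1) := by
    exact (Real.continuous_exp.comp (by fun_prop)).mul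
      (((continuous_besselI_zero.comp (by fun_prop)).pow d).sub continuous_const)
  exact h.continuousOn.div continuousOn_id (fun t ht => ne_of_gt ht)

lemma G_integrableOn {d : ℕ} (hd : 1 ≤ d) : IntegrableOn (G d) (Ioi (0:ℝ)) := by
  rw [← Ioc_union_Ioi_eq_Ioi (zero_le_one (α := ℝ))]
  refine IntegrableOn.union ?_ ?_
  · refine Integrable.mono' (integrable_const (2*(d:ℝ))) ?_ ?_
    · exact ((continuousOn_G d).mono Ioc_subset_Ioi_self).aestronglyMeasurable measurableSet_Ioc
    · rw [ae_restrict_iff' measurableSet_Ioc]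
      filter_upwards with t ht
      rw [Real.norm_eq_abs, abs_of_nonneg (G_nonneg d ht.1)]
      exact G_le_const d ht.1
  · refine Integrable.mono'
      ((integrableOn_Ioi_rpow_of_lt (show (-(3/2):ℝ) < -1 by norm_num) zero_lt_one).const_mul
        (Real.sqrt π / 4)) ?_ ?_
    · exact ((continuousOn_G d).mono (Ioi_subset_Ioi zero_le_one)).aestronglyMeasurable
        measurableSet_Ioi
    · rw [ae_restrict_iff' measurableSet_Ioi]
      filter_upwards with t ht
      have ht0 : (0:ℝ) < t := lt_trans zero_lt_one ht
      rw [Real.norm_eq_abs, abs_of_nonneg (G_nonneg d ht0)]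
      exact G_le_decay hd ht0

lemma H_integrableOn {d : ℕ} (hd : 1 ≤ d) (s : ℝ) :
    IntegrableOn (fun t => exp (-s^2*t) * G d t) (Ioi (0:ℝ)) := by
  refine (G_integrableOn hd).mono' ?_ ?_
  · exact ((Real.continuous_exp.comp (by fun_prop)).continuousOn.mul
      (continuousOn_G d)).aestronglyMeasurable measurableSet_Ioi
  · rw [ae_restrict_iff' measurableSet_Ioi]
    filter_upwards with t ht
    rw [Real.norm_eq_abs, abs_of_nonneg (mul_nonneg (exp_pos _).le (G_nonneg d ht))]
    have h1 : exp (-s^2*t) ≤ 1 := by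
      rw [Real.exp_le_one_iff]
      nlinarith [sq_nonneg s, mem_Ioi.1 ht]
    exact mul_le_of_le_one_left (G_nonneg d ht) h1

end Aux

/-- An alternate expression for `𝓘_d(s)` and its asymptotic behavior `𝓘_d(s) = log s² + o(1)`
as `s → +∞`. -/
theorem mathcalI_eq_and_asymptotic (d : ℕ) (hd : 1 ≤ d) :
    (∀ s : ℝ, 0 ≤ s →
      mathcalI d s
        = Real.log (s ^ 2 + 2 * d) -
            ∫ t in Set.Ioi (0:ℝ),
              Real.exp (-s ^ 2 * t) * Real.exp (-(2 * d * t)) *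
                ((besselI 0 (2 * t)) ^ d - 1) / t) ∧
    Filter.Tendsto (fun s : ℝ => mathcalI d s - Real.log (s ^ 2)) Filter.atTop (nhds 0) := by
  have hd1 : (1:ℝ) ≤ (d:ℝ) := by exact_mod_cast hd
  have hiEq : ∀ s : ℝ, (fun t : ℝ => Real.exp (-s ^ 2 * t) * Real.exp (-(2 * d * t)) *
      ((besselI 0 (2 * t)) ^ d - 1) / t) = fun t => exp (-s^2*t) * G d t := by
    intro s; funext t; rw [G]; ring
  have part1 : ∀ s : ℝ, 0 ≤ s →
      mathcalI d s
        = Real.log (s ^ 2 + 2 * d) -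
            ∫ t in Set.Ioi (0:ℝ),
              Real.exp (-s ^ 2 * t) * Real.exp (-(2 * d * t)) *
                ((besselI 0 (2 * t)) ^ d - 1) / t := by
    intro s _
    set a : ℝ := s^2 + 2*(d:ℝ) with haa
    have ha : (1:ℝ) ≤ a := by nlinarith [sq_nonneg s]
    have hexp : ∀ t : ℝ, exp (-(a*t)) = exp (-s^2*t) * exp (-(2*(d:ℝ)*t)) := by
      intro t; rw [← Real.exp_add, haa]; ring_nf
    have hsplit : (fun t : ℝ => (Real.exp (-s ^ 2 * t) * Real.exp (-(2 * d * t)) *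
        (besselI 0 (2 * t)) ^ d - Real.exp (-t)) / t)
        = fun t => (exp (-s^2*t) * G d t) + (exp (-(a*t)) - exp (-t))/t := by
      funext t; rw [hexp t, G]; ring
    rw [mathcalI, hsplit, integral_add (H_integrableOn hd s) (frullani_integrableOn ha),
      frullani_eq ha, hiEq s]
    ring
  refine ⟨part1, ?_⟩
  have key1 : Tendsto (fun s : ℝ => Real.log (s^2 + 2*(d:ℝ)) - Real.log (s^2)) atTop (nhds 0) := by
    have hratio : Tendsto (fun s : ℝ => 1 + 2*(d:ℝ)/s^2) atTop (nhds 1) := by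
      have h0 : Tendsto (fun s : ℝ => 2*(d:ℝ)/s^2) atTop (nhds 0) :=
        Tendsto.div_atTop tendsto_const_nhds (tendsto_pow_atTop two_ne_zero)
      simpa using tendsto_const_nhds.add h0
    have hlog : Tendsto (fun s : ℝ => Real.log (1 + 2*(d:ℝ)/s^2)) atTop (nhds 0) := by
      have := (Real.continuousAt_log one_ne_zero).tendsto.comp hratio
      simpa [Function.comp_def] using this
    refine hlog.congr' ?_
    filter_upwards [eventually_gt_atTop (0:ℝ)] with s hs
    have hs2 : (0:ℝ) < s^2 := by positivity
    rw [show 1 + 2*(d:ℝ)/s^2 = (s^2 + 2*(d:ℝ))/s^2 by field_simp,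
      Real.log_div (by nlinarith) hs2.ne']
  have key2 : Tendsto (fun s : ℝ => ∫ t in Ioi (0:ℝ), exp (-s^2*t) * G d t) atTop (nhds 0) := by
    have h := tendsto_integral_filter_of_dominated_convergence (μ := volume.restrict (Ioi (0:ℝ)))
      (F := fun (s : ℝ) (t : ℝ) => exp (-s^2*t) * G d t) (f := fun _ => (0:ℝ)) (bound := G d)
      (Eventually.of_forall fun s =>
        ((Real.continuous_exp.comp (by fun_prop)).continuousOn.mul
          (continuousOn_G d)).aestronglyMeasurable measurableSet_Ioi)
      (Eventually.of_forall fun s => by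
        rw [ae_restrict_iff' measurableSet_Ioi]
        filter_upwards with t ht
        rw [Real.norm_eq_abs, abs_of_nonneg (mul_nonneg (exp_pos _).le (G_nonneg d ht))]
        have h1 : exp (-s^2*t) ≤ 1 := by
          rw [Real.exp_le_one_iff]
          nlinarith [sq_nonneg s, mem_Ioi.1 ht]
        exact mul_le_of_le_one_left (G_nonneg d ht) h1)
      (G_integrableOn hd)
      (by
        rw [ae_restrict_iff' measurableSet_Ioi]
        filter_upwards with t ht
        have h1 : Tendsto (fun s : ℝ => -s^2*t) atTop atBot := by
          have h2 : Tendsto (fun s : ℝ => s^2) atTop atTop := tendsto_pow_atTop two_ne_zero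
          have h3 := h2.atTop_mul_const (mem_Ioi.1 ht)
          simpa [neg_mul] using h3
        have h5 := Real.tendsto_exp_atBot.comp h1
        simpa using h5.mul_const (G d t))
    simpa using h
  have := key1.sub key2
  rw [sub_zero] at this
  refine this.congr' ?_
  filter_upwards [eventually_ge_atTop (0:ℝ)] with s hs
  rw [part1 s hs, hiEq s]
  ring
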